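/- Let (E_t, β_{s,t}) be a subproduct system of two-dimensional Hilbert spaces with a basis (x_t,y_t)_t of type E_4. Then for every automorphism (θ_t)_t of (E_t,β) there exist c, b ∈ ℝ such that θ_t x_t = e^{ict} x_t and θ_t y_t = e^{ib} e^{ict} y_t for all t. -/

import Mathlib

noncomputable section

open scoped TensorProduct ComplexConjugate

namespace SubprodHilbert

section TensorConstruction


variable {E F : Type*} [NormedAddCommGroup E] [InnerProductSpace ℂ E]
  [NormedAddCommGroup F] [InnerProductSpace ℂ F]

local notation "⟪" x ", " y "⟫" => @inner ℂ _ _ x y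

/-- For fixed `u, v`, the ℂ-bilinear functional `(u', v') ↦ ⟪u,u'⟫ ⟪v,v'⟫`. -/
def innerAux (u : E) (v : F) : E →ₗ[ℂ] F →ₗ[ℂ] ℂ :=
  LinearMap.mk₂ ℂ (fun u' v' => ⟪u, u'⟫ * ⟪v, v'⟫)
    (fun m₁ m₂ n => by simp [inner_add_right]; ring)
    (fun c m n => by simp [inner_smul_right]; ring)
    (fun m n₁ n₂ => by simp [inner_add_right]; ring)
    (fun c m n => by simp [inner_smul_right]; ring)

@[simp] lemma innerAux_apply (u u' : E) (v v' : F) :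
    innerAux u v u' v' = ⟪u, u'⟫ * ⟪v, v'⟫ := rfl

/-- The (conjugate-linear-in-the-first-variable) map sending `z : E ⊗ F` to the linear
functional `w ↦ ⟪z, w⟫`. -/
def innerFunc : E ⊗[ℂ] F →+ (E ⊗[ℂ] F →ₗ[ℂ] ℂ) :=
  TensorProduct.liftAddHom
    (AddMonoidHom.mk'
      (fun u => AddMonoidHom.mk' (fun v => TensorProduct.lift (innerAux u v))
        (fun v₁ v₂ => by
          apply TensorProduct.ext'
          intro u' v'
          simp [inner_add_left]
          ring))
      (fun u₁ u₂ => by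
        ext v : 1
        apply TensorProduct.ext'
        intro u' v'
        simp [inner_add_left]
        ring))
    (fun c u v => by
      apply TensorProduct.ext'
      intro u' v'
      simp [inner_smul_left]
      ring)

@[simp] lemma innerFunc_tmul (u u' : E) (v v' : F) :
    innerFunc (u ⊗ₜ[ℂ] v) (u' ⊗ₜ[ℂ] v') = ⟪u, u'⟫ * ⟪v, v'⟫ := rfl

lemma innerFunc_smul (c : ℂ) (z : E ⊗[ℂ] F) :
    innerFunc (c • z) = conj c • innerFunc z := by
  induction z using TensorProduct.induction_on with
  | zero => simp
  | tmul u v =>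
      rw [TensorProduct.smul_tmul']
      apply TensorProduct.ext'
      intro u' v'
      simp [inner_smul_left]
      ring
  | add z₁ z₂ h₁ h₂ => rw [smul_add, map_add, map_add, h₁, h₂, smul_add]

lemma innerFunc_conj_symm (z w : E ⊗[ℂ] F) :
    conj (innerFunc w z) = innerFunc z w := by
  induction z using TensorProduct.induction_on with
  | zero => simp
  | tmul u v =>
      induction w using TensorProduct.induction_on with
      | zero => simp
      | tmul u' v' =>
          simp only [innerFunc_tmul, map_mul, inner_conj_symm]
      | add w₁ w₂ h₁ h₂ => simp [map_add, h₁, h₂]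
  | add z₁ z₂ h₁ h₂ => simp [map_add, h₁, h₂]

lemma exists_orthonormal_rep (z : E ⊗[ℂ] F) :
    ∃ (n : ℕ) (e : Fin n → E) (w : Fin n → F),
      Orthonormal ℂ e ∧ z = ∑ i, e i ⊗ₜ[ℂ] w i := by
  obtain ⟨S, rfl⟩ := TensorProduct.exists_finset z
  set U : Submodule ℂ E := Submodule.span ℂ (Prod.fst '' (S : Set (E × F))) with hU
  haveI : FiniteDimensional ℂ U :=
    FiniteDimensional.span_of_finite ℂ (S.finite_toSet.image _)
  let b : OrthonormalBasis (Fin (Module.finrank ℂ U)) ℂ U := stdOrthonormalBasis ℂ U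
  have hone : Orthonormal ℂ (fun i => (b i : E)) := by
    have hb := b.orthonormal
    constructor
    · intro i; simpa [norm] using hb.1 i
    · intro i j hij; simpa [Submodule.coe_inner] using hb.2 hij
  refine ⟨_, fun i => (b i : E), fun i => ∑ p ∈ S, ⟪(b i : E), p.1⟫ • p.2, hone, ?_⟩
  have key : ∀ p ∈ S, p.1 ⊗ₜ[ℂ] p.2 = ∑ i, ⟪(b i : E), p.1⟫ • ((b i : E) ⊗ₜ[ℂ] p.2) := by
    intro p hp
    have hmem : p.1 ∈ U := Submodule.subset_span ⟨p, hp, rfl⟩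
    have hrep : ((∑ i, (⟪b i, (⟨p.1, hmem⟩ : U)⟫ : ℂ) • b i : U) : E) = p.1 := by
      rw [b.sum_repr' ⟨p.1, hmem⟩]
    have h2 : ∀ i, (⟪b i, (⟨p.1, hmem⟩ : U)⟫ : ℂ) = ⟪(b i : E), p.1⟫ := fun i =>
      Submodule.coe_inner U (b i) ⟨p.1, hmem⟩
    have hrep' : p.1 = ∑ i, ⟪(b i : E), p.1⟫ • (b i : E) := by
      calc p.1 = ((∑ i, (⟪b i, (⟨p.1, hmem⟩ : U)⟫ : ℂ) • b i : U) : E) := hrep.symm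
        _ = ∑ i, (⟪b i, (⟨p.1, hmem⟩ : U)⟫ : ℂ) • (b i : E) := by push_cast; rfl
        _ = ∑ i, ⟪(b i : E), p.1⟫ • (b i : E) := Finset.sum_congr rfl fun i _ => by rw [h2]
    calc p.1 ⊗ₜ[ℂ] p.2 = (∑ i, ⟪(b i : E), p.1⟫ • (b i : E)) ⊗ₜ[ℂ] p.2 := by rw [← hrep']
      _ = ∑ i, ⟪(b i : E), p.1⟫ • ((b i : E) ⊗ₜ[ℂ] p.2) := by
          rw [TensorProduct.sum_tmul]
          refine Finset.sum_congr rfl fun i _ => ?_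
          rw [TensorProduct.smul_tmul']
  calc ∑ p ∈ S, p.1 ⊗ₜ[ℂ] p.2
      = ∑ p ∈ S, ∑ i, ⟪(b i : E), p.1⟫ • ((b i : E) ⊗ₜ[ℂ] p.2) :=
        Finset.sum_congr rfl key
    _ = ∑ i, ∑ p ∈ S, ⟪(b i : E), p.1⟫ • ((b i : E) ⊗ₜ[ℂ] p.2) := Finset.sum_comm
    _ = ∑ i, (b i : E) ⊗ₜ[ℂ] (∑ p ∈ S, ⟪(b i : E), p.1⟫ • p.2) := by
        refine Finset.sum_congr rfl fun i _ => ?_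
        rw [TensorProduct.tmul_sum]
        refine Finset.sum_congr rfl fun p _ => ?_
        rw [TensorProduct.tmul_smul]

lemma innerFunc_self (n : ℕ) (e : Fin n → E) (w : Fin n → F) (he : Orthonormal ℂ e) :
    innerFunc (∑ i, e i ⊗ₜ[ℂ] w i) (∑ i, e i ⊗ₜ[ℂ] w i) = ∑ i, ⟪w i, w i⟫ := by
  have hee : ∀ i j, (⟪e i, e j⟫ : ℂ) = if i = j then 1 else 0 := orthonormal_iff_ite.mp he
  simp only [map_sum, LinearMap.sum_apply, Finset.sum_apply, innerFunc_tmul, hee, ite_mul,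
    one_mul, zero_mul]
  rw [Finset.sum_comm]
  simp

/-- The inner-product-space core on the algebraic tensor product of two complex
inner product spaces, determined by `⟪u ⊗ v, u' ⊗ v'⟫ = ⟪u,u'⟫ ⟪v,v'⟫`. -/
def tensorCore : InnerProductSpace.Core ℂ (E ⊗[ℂ] F) where
  inner z w := innerFunc z w
  conj_inner_symm := innerFunc_conj_symm
  re_inner_nonneg z := by
    show 0 ≤ RCLike.re (innerFunc z z)
    obtain ⟨n, e, w, he, rfl⟩ := exists_orthonormal_rep z
    rw [innerFunc_self n e w he]
    rw [map_sum]
    exact Finset.sum_nonneg fun i _ => inner_self_nonneg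
  add_left z₁ z₂ w := by
    show innerFunc (z₁ + z₂) w = innerFunc z₁ w + innerFunc z₂ w
    rw [map_add]; rfl
  smul_left z w c := by
    show innerFunc (c • z) w = conj c * innerFunc z w
    rw [innerFunc_smul]; rfl
  definite z hz := by
    replace hz : innerFunc z z = 0 := hz
    obtain ⟨n, e, w, he, rfl⟩ := exists_orthonormal_rep z
    rw [innerFunc_self n e w he] at hz
    have hz' : ∑ i, (‖w i‖ ^ 2 : ℝ) = 0 := by
      have := congrArg Complex.re hz
      simpa [← @inner_self_eq_norm_sq ℂ] using this
    have hw : ∀ i ∈ Finset.univ, w i = 0 := by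
      intro i hi
      have h0 : (‖w i‖ ^ 2 : ℝ) = 0 :=
        (Finset.sum_eq_zero_iff_of_nonneg fun j _ => sq_nonneg _).mp hz' i hi
      simpa using h0
    calc ∑ i, e i ⊗ₜ[ℂ] w i = ∑ i : Fin n, (0 : E ⊗[ℂ] F) :=
          Finset.sum_congr rfl fun i hi => by rw [hw i hi, TensorProduct.tmul_zero]
      _ = 0 := Finset.sum_const_zero

instance tensorNormedAddCommGroup : NormedAddCommGroup (E ⊗[ℂ] F) :=
  @InnerProductSpace.Core.toNormedAddCommGroup ℂ _ _ _ _ tensorCore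

instance tensorInnerProductSpace : InnerProductSpace ℂ (E ⊗[ℂ] F) :=
  InnerProductSpace.ofCore tensorCore.toCore

@[simp] lemma inner_tmul (u u' : E) (v v' : F) :
    (inner ℂ (u ⊗ₜ[ℂ] v) (u' ⊗ₜ[ℂ] v') : ℂ) = ⟪u, u'⟫ * ⟪v, v'⟫ := rfl
end TensorConstruction


/-- Cast between the fibers of a family of inner product spaces along an equality of
indices, as a linear isometric isomorphism. -/
def castE {ι : Type*} (E : ι → Type*) [∀ t, NormedAddCommGroup (E t)]
    [∀ t, InnerProductSpace ℂ (E t)] {a b : ι} (h : a = b) : E a ≃ₗᵢ[ℂ] E b := by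
  subst h; exact LinearIsometryEquiv.refl ℂ (E a)


section Discrete

variable (E F : ℕ+ → Type*)
  [∀ t, NormedAddCommGroup (E t)] [∀ t, InnerProductSpace ℂ (E t)]
  [∀ t, NormedAddCommGroup (F t)] [∀ t, InnerProductSpace ℂ (F t)]
variable (β : ∀ s t : ℕ+, E (s + t) →ₗᵢ[ℂ] (E s ⊗[ℂ] E t))
variable (γ : ∀ s t : ℕ+, F (s + t) →ₗᵢ[ℂ] (F s ⊗[ℂ] F t))

/-- The associativity condition in the definition of a subproduct system. -/
def SubprodAssoc : Prop :=
  ∀ r s t : ℕ+, ∀ u : E (r + s + t),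
    (TensorProduct.assoc ℂ (E r) (E s) (E t))
      (TensorProduct.map (β r s).toLinearMap LinearMap.id (β (r + s) t u))
    = TensorProduct.map LinearMap.id (β s t).toLinearMap
        (β r (s + t) (castE E (add_assoc r s t) u))

/-- `(x, y)` is a basis of type `𝓔₁(a)` of the subproduct system `(E, β)`. -/
def IsBasisE1 (a : ℝ) (x y : ∀ t : ℕ+, E t) : Prop :=
  (∀ t, ‖x t‖ = 1) ∧ (∀ t, ‖y t‖ = 1) ∧
  (∀ t : ℕ+, (inner ℂ (x t) (y t) : ℂ) = (a : ℂ) ^ (t : ℕ)) ∧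
  (∀ s t : ℕ+, β s t (x (s + t)) = x s ⊗ₜ[ℂ] x t) ∧
  (∀ s t : ℕ+, β s t (y (s + t)) = y s ⊗ₜ[ℂ] y t)

/-- `(x, y)` is a basis of type `𝓔₂(a)` of the subproduct system `(E, β)`. -/
def IsBasisE2 (a : ℝ) (x y : ∀ t : ℕ+, E t) : Prop :=
  (∀ t, ‖x t‖ = 1) ∧ (∀ t, ‖y t‖ = 1) ∧
  (∀ t : ℕ+, (inner ℂ (x t) (y t) : ℂ) = (a : ℂ) ^ (t : ℕ)) ∧
  (∀ s t : ℕ+, Even (s : ℕ) → β s t (x (s + t)) = x s ⊗ₜ[ℂ] x t) ∧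
  (∀ s t : ℕ+, ¬ Even (s : ℕ) → β s t (x (s + t)) = x s ⊗ₜ[ℂ] y t) ∧
  (∀ s t : ℕ+, Even (s : ℕ) → β s t (y (s + t)) = y s ⊗ₜ[ℂ] y t) ∧
  (∀ s t : ℕ+, ¬ Even (s : ℕ) → β s t (y (s + t)) = y s ⊗ₜ[ℂ] x t)

/-- `(x, y)` is a basis of type `𝓔₃(λ)` of the subproduct system `(E, β)`. -/
def IsBasisE3 (l : ℂ) (x y : ∀ t : ℕ+, E t) : Prop :=
  (∀ t, ‖x t‖ = 1) ∧
  (∀ t : ℕ+, ‖y t‖ ^ 2 = ∑ k ∈ Finset.range (t : ℕ), ‖l‖ ^ (2 * k)) ∧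
  (∀ t : ℕ+, (inner ℂ (x t) (y t) : ℂ) = 0) ∧
  (∀ s t : ℕ+, β s t (x (s + t)) = x s ⊗ₜ[ℂ] x t) ∧
  (∀ s t : ℕ+, β s t (y (s + t)) = y s ⊗ₜ[ℂ] x t + l ^ (s : ℕ) • (x s ⊗ₜ[ℂ] y t))

/-- `(x, y)` is a basis of type `𝓔₄` of the subproduct system `(E, β)`. -/
def IsBasisE4 (x y : ∀ t : ℕ+, E t) : Prop :=
  (∀ t, ‖x t‖ = 1) ∧ (∀ t, ‖y t‖ = 1) ∧
  (∀ t : ℕ+, (inner ℂ (x t) (y t) : ℂ) = 0) ∧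
  (∀ s t : ℕ+, β s t (x (s + t)) = x s ⊗ₜ[ℂ] x t) ∧
  (∀ s t : ℕ+, β s t (y (s + t)) = y s ⊗ₜ[ℂ] x t)

/-- `(x, y)` is a basis of type `𝓔₅` of the subproduct system `(E, β)`. -/
def IsBasisE5 (x y : ∀ t : ℕ+, E t) : Prop :=
  (∀ t, ‖x t‖ = 1) ∧ (∀ t, ‖y t‖ = 1) ∧
  (∀ t : ℕ+, (inner ℂ (x t) (y t) : ℂ) = 0) ∧
  (∀ s t : ℕ+, β s t (x (s + t)) = x s ⊗ₜ[ℂ] x t) ∧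
  (∀ s t : ℕ+, β s t (y (s + t)) = x s ⊗ₜ[ℂ] y t)

/-- The five types of bases, together with their parameters. -/
inductive BType : Type
  | e1 (a : ℝ) | e2 (a : ℝ) | e3 (l : ℂ) | e4 | e5

/-- `(x, y)` is a basis of the subproduct system `(E, β)` of the given type (this includes
the admissibility constraints `a ∈ [0,1)`, resp. `λ ≠ 0`, on the parameter). -/
def IsBasisOfType : BType → (∀ t : ℕ+, E t) → (∀ t : ℕ+, E t) → Prop
  | .e1 a => fun x y => 0 ≤ a ∧ a < 1 ∧ IsBasisE1 E β a x y
  | .e2 a => fun x y => 0 ≤ a ∧ a < 1 ∧ IsBasisE2 E β a x y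
  | .e3 l => fun x y => l ≠ 0 ∧ IsBasisE3 E β l x y
  | .e4 => fun x y => IsBasisE4 E β x y
  | .e5 => fun x y => IsBasisE5 E β x y

/-- The family `θ` of unitaries intertwines the subproduct systems `(E, β)` and `(F, γ)`,
i.e. it is an isomorphism of subproduct systems. -/
def Intertwines (θ : ∀ t : ℕ+, E t ≃ₗᵢ[ℂ] F t) : Prop :=
  ∀ s t : ℕ+, ∀ w : E (s + t),
    γ s t (θ (s + t) w) =
      TensorProduct.map (θ s).toLinearEquiv.toLinearMap (θ t).toLinearEquiv.toLinearMap
        (β s t w)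

/-- The structure maps of the subproduct system `(E_{mt})_t` obtained by restricting
`(E, β)` to the multiples of `m`. -/
def restrictβ (m : ℕ+) :
    ∀ s t : ℕ+, E (m * (s + t)) →ₗᵢ[ℂ] (E (m * s) ⊗[ℂ] E (m * t)) := fun s t =>
  (β (m * s) (m * t)).comp (castE E (by rw [mul_add])).toLinearIsometry

end Discrete


section Aux

variable {G : Type*} [NormedAddCommGroup G] [InnerProductSpace ℂ G]

/-- In a two-dimensional complex inner product space, any vector decomposes along a pair of
orthonormal vectors. -/
lemma decomp_two (h2 : Module.finrank ℂ G = 2) {x y : G} (hx : ‖x‖ = 1) (hy : ‖y‖ = 1)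
    (hxy : (inner ℂ x y : ℂ) = 0) (v : G) :
    v = (inner ℂ x v : ℂ) • x + (inner ℂ y v : ℂ) • y := by
  haveI : FiniteDimensional ℂ G := FiniteDimensional.of_finrank_eq_succ h2
  have hyx : (inner ℂ y x : ℂ) = 0 := by rw [← inner_conj_symm, hxy, map_zero]
  have horth : Orthonormal ℂ ![x, y] := by
    constructor
    · intro i; fin_cases i <;> simpa [hx, hy]
    · intro i j hij
      fin_cases i <;> fin_cases j <;> simp_all [hxy, hyx]
  have hcard : Fintype.card (Fin 2) = Module.finrank ℂ G := by simp [h2]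
  let b := basisOfOrthonormalOfCardEqFinrank horth hcard
  have hbcoe : ⇑b = ![x, y] := coe_basisOfOrthonormalOfCardEqFinrank horth hcard
  let B : OrthonormalBasis (Fin 2) ℂ G := b.toOrthonormalBasis (by rw [hbcoe]; exact horth)
  have hBcoe : ∀ i, B i = ![x, y] i := by
    intro i
    have : B i = b i := by simp [B, Module.Basis.coe_toOrthonormalBasis]
    rw [this, hbcoe]
  have := B.sum_repr' v
  rw [Fin.sum_univ_two, hBcoe 0, hBcoe 1] at this
  simpa using this.symm

lemma conj_mul_self_eq_zero {z : ℂ} (h : (starRingEnd ℂ) z * z = 0) : z = 0 := by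
  have : (Complex.normSq z : ℂ) = 0 := by rw [Complex.normSq_eq_conj_mul_self]; exact h
  exact Complex.normSq_eq_zero.mp (by exact_mod_cast this)

lemma abs_eq_one_of_conj_mul {z : ℂ} (h : (starRingEnd ℂ) z * z = 1) : ‖z‖ = 1 := by
  have h1 : (Complex.normSq z : ℂ) = 1 := by rw [Complex.normSq_eq_conj_mul_self]; exact h
  have h2 : Complex.normSq z = 1 := by exact_mod_cast h1
  have h3 : ‖z‖ ^ 2 = 1 := by rw [Complex.sq_norm]; exact h2
  nlinarith [norm_nonneg z]

end Aux

/-- **Lemma 1.11, case `𝓔₄`.** -/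
theorem statement6
    (E : ℕ+ → Type*) [∀ t, NormedAddCommGroup (E t)] [∀ t, InnerProductSpace ℂ (E t)]
    (hdim : ∀ t, Module.finrank ℂ (E t) = 2)
    (β : ∀ s t : ℕ+, E (s + t) →ₗᵢ[ℂ] (E s ⊗[ℂ] E t))
    (hassoc : SubprodAssoc E β)
    (x y : ∀ t : ℕ+, E t) (hxy : IsBasisE4 E β x y)
    (θ : ∀ t : ℕ+, E t ≃ₗᵢ[ℂ] E t) (hθ : Intertwines E E β β θ) :
    ∃ c b : ℝ, ∀ t : ℕ+,
      θ t (x t) = Complex.exp (Complex.I * (c : ℂ) * ((t : ℕ) : ℂ)) • x t ∧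
      θ t (y t) = (Complex.exp (Complex.I * (b : ℂ)) *
        Complex.exp (Complex.I * (c : ℂ) * ((t : ℕ) : ℂ))) • y t := by
  obtain ⟨hx1, hy1, hip, hβx, hβy⟩ := hxy
  set a : ℕ+ → ℂ := fun t => inner ℂ (x t) (θ t (x t)) with ha
  set f : ℕ+ → ℂ := fun t => inner ℂ (y t) (θ t (x t)) with hf
  set g : ℕ+ → ℂ := fun t => inner ℂ (x t) (θ t (y t)) with hg
  set d : ℕ+ → ℂ := fun t => inner ℂ (y t) (θ t (y t)) with hd
  have hdecx : ∀ t, θ t (x t) = a t • x t + f t • y t := fun t =>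
    decomp_two (hdim t) (hx1 t) (hy1 t) (hip t) _
  have hdecy : ∀ t, θ t (y t) = g t • x t + d t • y t := fun t =>
    decomp_two (hdim t) (hx1 t) (hy1 t) (hip t) _
  have hipc : ∀ t : ℕ+, (inner ℂ (y t) (x t) : ℂ) = 0 := fun t => by
    rw [← inner_conj_symm, hip t, map_zero]
  have hxx : ∀ t : ℕ+, (inner ℂ (x t) (x t) : ℂ) = 1 := fun t => by
    rw [inner_self_eq_norm_sq_to_K, hx1 t]; norm_num
  have hyy : ∀ t : ℕ+, (inner ℂ (y t) (y t) : ℂ) = 1 := fun t => by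
    rw [inner_self_eq_norm_sq_to_K, hy1 t]; norm_num
  -- multiplicativity
  have hmul_a : ∀ s t, a (s + t) = a s * a t := by
    intro s t
    have h1 : a (s + t) =
        @inner ℂ _ tensorInnerProductSpace.toInner (β s t (x (s + t))) (β s t (θ (s + t) (x (s + t)))) :=
      ((β s t).inner_map_map _ _).symm
    rw [h1, hθ, hβx, TensorProduct.map_tmul]
    exact inner_tmul _ _ _ _
  have hmul_f : ∀ s t, f (s + t) = f s * a t := by
    intro s t
    have h1 : f (s + t) =
        @inner ℂ _ tensorInnerProductSpace.toInner (β s t (y (s + t))) (β s t (θ (s + t) (x (s + t)))) :=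
      ((β s t).inner_map_map _ _).symm
    rw [h1, hθ, hβx, hβy, TensorProduct.map_tmul]
    exact inner_tmul _ _ _ _
  have hmul_d : ∀ s t, d (s + t) = d s * a t := by
    intro s t
    have h1 : d (s + t) =
        @inner ℂ _ tensorInnerProductSpace.toInner (β s t (y (s + t))) (β s t (θ (s + t) (y (s + t)))) :=
      ((β s t).inner_map_map _ _).symm
    rw [h1, hθ, hβy, TensorProduct.map_tmul]
    exact inner_tmul _ _ _ _
  -- unitarity relations
  have hnx : ∀ t, (starRingEnd ℂ) (a t) * a t + (starRingEnd ℂ) (f t) * f t = 1 := by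
    intro t
    have h1 : (inner ℂ (θ t (x t)) (θ t (x t)) : ℂ) = 1 := by
      rw [(θ t).inner_map_map, hxx t]
    rw [hdecx t] at h1
    simp only [inner_add_left, inner_add_right, inner_smul_left, inner_smul_right,
      hip t, hipc t, hxx t, hyy t, mul_zero, mul_one, zero_add, add_zero] at h1
    linear_combination h1
  have hny : ∀ t, (starRingEnd ℂ) (g t) * g t + (starRingEnd ℂ) (d t) * d t = 1 := by
    intro t
    have h1 : (inner ℂ (θ t (y t)) (θ t (y t)) : ℂ) = 1 := by
      rw [(θ t).inner_map_map, hyy t]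
    rw [hdecy t] at h1
    simp only [inner_add_left, inner_add_right, inner_smul_left, inner_smul_right,
      hip t, hipc t, hxx t, hyy t, mul_zero, mul_one, zero_add, add_zero] at h1
    linear_combination h1
  have hort : ∀ t, (starRingEnd ℂ) (a t) * g t + (starRingEnd ℂ) (f t) * d t = 0 := by
    intro t
    have h1 : (inner ℂ (θ t (x t)) (θ t (y t)) : ℂ) = 0 := by
      rw [(θ t).inner_map_map, hip t]
    rw [hdecx t, hdecy t] at h1
    simp only [inner_add_left, inner_add_right, inner_smul_left, inner_smul_right,
      hip t, hipc t, hxx t, hyy t, mul_zero, mul_one, zero_add, add_zero] at h1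
    linear_combination h1
  -- |a t| = 1
  have hat : ∀ t, (starRingEnd ℂ) (a t) * a t = 1 := by
    intro t
    have h1 := hnx (t + t)
    rw [hmul_a t t, hmul_f t t] at h1
    simp only [map_mul] at h1
    have h2 := hnx t
    linear_combination h1 - ((starRingEnd ℂ) (a t) * a t) * h2
  have hf0 : ∀ t, f t = 0 := by
    intro t
    apply conj_mul_self_eq_zero
    linear_combination hnx t - hat t
  have hg0 : ∀ t, g t = 0 := by
    intro t
    have h1 := hort t
    rw [hf0 t] at h1
    simp only [map_zero, zero_mul, add_zero] at h1
    have ha0 : (starRingEnd ℂ) (a t) ≠ 0 := by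
      intro h
      have h2 := hat t
      rw [h, zero_mul] at h2
      exact one_ne_zero h2.symm
    rcases mul_eq_zero.mp h1 with h | h
    · exact absurd h ha0
    · exact h
  have hdt : ∀ t, (starRingEnd ℂ) (d t) * d t = 1 := by
    intro t
    have h1 := hny t
    rw [hg0 t] at h1
    simpa using h1
  -- choose angles
  have habs_a1 : ‖a 1‖ = 1 := abs_eq_one_of_conj_mul (hat 1)
  have habs_w : ‖d 1 * (starRingEnd ℂ) (a 1)‖ = 1 := by
    rw [norm_mul, Complex.norm_conj, habs_a1, mul_one]
    exact abs_eq_one_of_conj_mul (hdt 1)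
  set c : ℝ := Complex.arg (a 1) with hc
  set b : ℝ := Complex.arg (d 1 * (starRingEnd ℂ) (a 1)) with hb
  have ha1 : a 1 = Complex.exp (Complex.I * (c : ℂ)) := by
    have := Complex.norm_mul_exp_arg_mul_I (a 1)
    rw [habs_a1] at this
    rw [← hc] at this
    rw [show Complex.I * (c : ℂ) = (c : ℂ) * Complex.I by ring]
    simpa using this.symm
  have hd1 : d 1 = Complex.exp (Complex.I * (b : ℂ)) * a 1 := by
    have := Complex.norm_mul_exp_arg_mul_I (d 1 * (starRingEnd ℂ) (a 1))
    rw [habs_w, ← hb] at this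
    simp only [Complex.ofReal_one, one_mul] at this
    have h2 : d 1 * ((starRingEnd ℂ) (a 1) * a 1) =
        Complex.exp ((b : ℂ) * Complex.I) * a 1 := by
      rw [← mul_assoc, this]
    rw [hat 1, mul_one] at h2
    rw [h2, show Complex.I * (b : ℂ) = (b : ℂ) * Complex.I by ring]
  -- the key induction
  have key : ∀ t : ℕ+, a t = Complex.exp (Complex.I * (c : ℂ) * ((t : ℕ) : ℂ)) ∧
      d t = Complex.exp (Complex.I * (b : ℂ)) *
        Complex.exp (Complex.I * (c : ℂ) * ((t : ℕ) : ℂ)) := by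
    intro t
    induction t using PNat.recOn with
    | one =>
        constructor
        · rw [ha1]; norm_num
        · rw [hd1, ha1]; norm_num
    | succ t ih =>
        have hcast : (((t + 1 : ℕ+) : ℕ) : ℂ) = ((t : ℕ) : ℂ) + 1 := by
          push_cast [PNat.add_coe, PNat.one_coe]; ring
        constructor
        · rw [hmul_a t 1, ih.1, ha1, hcast, ← Complex.exp_add]
          ring_nf
        · rw [hmul_d t 1, ih.2, ha1, hcast, mul_assoc, ← Complex.exp_add]
          ring_nf
  refine ⟨c, b, fun t => ⟨?_, ?_⟩⟩
  · rw [hdecx t, hf0 t, (key t).1, zero_smul, add_zero]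
  · rw [hdecy t, hg0 t, (key t).2, zero_smul, zero_add]


end SubprodHilbert
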